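/- The C*-algebras C(𝕋, ℂ) and C(𝕋 × 𝕋, ℂ) of continuous complex-valued functions on the circle and on the 2-torus are not isomorphic as *-algebras over ℂ: there is no ℂ-linear star-algebra isomorphism between them. -/

import Mathlib

open Set WeakDual WeakDual.CharacterSpace Complex

namespace CircleTorusAux

/-- Finite sets have dense complement in a nontrivial connected T1 space. -/
lemma dense_compl_of_finite {α : Type*} [TopologicalSpace α] [T1Space α] [ConnectedSpace α]
    [Nontrivial α] {s : Set α} (hs : s.Finite) : Dense sᶜ := by
  rw [← interior_eq_empty_iff_dense_compl]
  by_contra h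
  obtain ⟨x, hx⟩ := nonempty_iff_ne_empty.mpr h
  have hfin : (interior s).Finite := hs.subset interior_subset
  have hopen : IsOpen ({x} : Set α) := by
    have : ({x} : Set α) = interior s ∩ (interior s \ {x})ᶜ := by
      ext y
      simp only [mem_singleton_iff, mem_inter_iff, mem_compl_iff, mem_diff, not_and, not_not]
      constructor
      · rintro rfl; exact ⟨hx, fun _ => rfl⟩
      · rintro ⟨hy, hy'⟩; exact hy' hy
    rw [this]
    exact isOpen_interior.inter hfin.diff.isClosed.isOpen_compl
  rcases isClopen_iff.mp ⟨isClosed_singleton, hopen⟩ with h' | h'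
  · exact absurd h' (singleton_ne_empty x)
  · obtain ⟨y, hy⟩ := exists_ne x
    exact hy (by rw [← mem_singleton_iff, h']; trivial)

/-- The complement of two points in the square of a suitable connected space is connected. -/
lemma compl_two_connected {X : Type*} [TopologicalSpace X] [T1Space X] [ConnectedSpace X]
    [Nontrivial X] (hX : ∀ a c : X, ∃ u : X, u ≠ a ∧ u ≠ c) (p q : X × X) :
    IsConnected ({p, q}ᶜ : Set (X × X)) := by
  obtain ⟨u₀, hu₀a, hu₀c⟩ := hX p.1 q.1
  obtain ⟨v₀, hv₀b, hv₀d⟩ := hX p.2 q.2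
  set U : Set X := {p.1, q.1}ᶜ with hU
  set V : Set X := {p.2, q.2}ᶜ with hV
  have hu₀ : u₀ ∈ U := by simp [hU, hu₀a, hu₀c]
  have hv₀ : v₀ ∈ V := by simp [hV, hv₀b, hv₀d]
  set K : X → X → Set (X × X) := fun u v =>
    ({u} ×ˢ univ) ∪ ((univ ×ˢ {v₀}) ∪ (({u₀} ×ˢ univ) ∪ (univ ×ˢ {v}))) with hK
  have hKconn : ∀ u v, IsPreconnected (K u v) := by
    intro u v
    have hs : IsPreconnected ({u} ×ˢ (univ : Set X)) :=
      isPreconnected_singleton.prod isPreconnected_univ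
    have h2 : IsPreconnected ((univ : Set X) ×ˢ {v₀}) :=
      isPreconnected_univ.prod isPreconnected_singleton
    have h3 : IsPreconnected ({u₀} ×ˢ (univ : Set X)) :=
      isPreconnected_singleton.prod isPreconnected_univ
    have h4 : IsPreconnected ((univ : Set X) ×ˢ {v}) :=
      isPreconnected_univ.prod isPreconnected_singleton
    have h34 : IsPreconnected (({u₀} ×ˢ (univ : Set X)) ∪ ((univ : Set X) ×ˢ {v})) :=
      IsPreconnected.union (u₀, v) (by simp) (by simp) h3 h4
    have h234 : IsPreconnected (((univ : Set X) ×ˢ {v₀}) ∪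
        (({u₀} ×ˢ (univ : Set X)) ∪ ((univ : Set X) ×ˢ {v}))) :=
      IsPreconnected.union (u₀, v₀) (by simp) (by simp) h2 h34
    exact IsPreconnected.union (u, v₀) (by simp) (by simp) hs h234
  set W : Set (X × X) := ⋃₀ {t | ∃ u ∈ U, ∃ v ∈ V, t = K u v} with hW
  have hWconn : IsPreconnected W := by
    apply isPreconnected_sUnion (u₀, v₀)
    · rintro t ⟨u, -, v, -, rfl⟩
      rw [hK]
      exact Or.inr (Or.inr (Or.inl (by simp)))
    · rintro t ⟨u, -, v, -, rfl⟩
      exact hKconn u v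
  have hmemcompl : ∀ x y : X, (x ≠ p.1 ∧ x ≠ q.1) ∨ (y ≠ p.2 ∧ y ≠ q.2) →
      (x, y) ∈ ({p, q}ᶜ : Set (X × X)) := by
    intro x y key
    simp only [mem_compl_iff, mem_insert_iff, mem_singleton_iff, not_or]
    constructor
    · intro hp
      rcases key with ⟨h1, -⟩ | ⟨h1, -⟩
      · exact h1 (congrArg Prod.fst hp)
      · exact h1 (congrArg Prod.snd hp)
    · intro hq
      rcases key with ⟨-, h1⟩ | ⟨-, h1⟩
      · exact h1 (congrArg Prod.fst hq)
      · exact h1 (congrArg Prod.snd hq)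
  have hWsub : W ⊆ ({p, q}ᶜ : Set (X × X)) := by
    rintro ⟨x, y⟩ ⟨t, ⟨u, hu, v, hv, rfl⟩, hxy⟩
    simp only [hU, hV, mem_compl_iff, mem_insert_iff, mem_singleton_iff, not_or] at hu hv
    apply hmemcompl
    rcases hxy with h | h | h | h
    · obtain ⟨h1, -⟩ := mem_prod.mp h
      simp only [mem_singleton_iff] at h1
      exact Or.inl (h1 ▸ hu)
    · obtain ⟨-, h2⟩ := mem_prod.mp h
      simp only [mem_singleton_iff] at h2
      exact Or.inr (h2 ▸ ⟨hv₀b, hv₀d⟩)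
    · obtain ⟨h1, -⟩ := mem_prod.mp h
      simp only [mem_singleton_iff] at h1
      exact Or.inl (h1 ▸ ⟨hu₀a, hu₀c⟩)
    · obtain ⟨-, h2⟩ := mem_prod.mp h
      simp only [mem_singleton_iff] at h2
      exact Or.inr (h2 ▸ hv)
  have hUdense : Dense U := by
    apply dense_compl_of_finite
    exact (finite_singleton _).insert _
  have hsubW : U ×ˢ (univ : Set X) ⊆ W := by
    rintro ⟨x, y⟩ ⟨hx, -⟩
    exact ⟨K x v₀, ⟨x, hx, v₀, hv₀, rfl⟩, Or.inl (by simp)⟩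
  have hclos : ({p, q}ᶜ : Set (X × X)) ⊆ closure W := by
    intro x _
    apply closure_mono hsubW
    rw [closure_prod_eq, closure_univ, hUdense.closure_eq]
    exact ⟨trivial, trivial⟩
  exact ⟨⟨(u₀, v₀), hmemcompl u₀ v₀ (Or.inl ⟨hu₀a, hu₀c⟩)⟩,
    hWconn.subset_closure hWsub hclos⟩

notation "𝕋" => AddCircle (1:ℝ)

lemma coe_ne {a b : ℝ} (m : ℤ) (h0 : (m:ℝ) < a - b) (h1 : a - b < m+1) : (↑a : 𝕋) ≠ ↑b := by
  intro hab
  rw [← sub_eq_zero, ← AddCircle.coe_sub, AddCircle.coe_eq_zero_iff] at hab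
  obtain ⟨n, hn⟩ := hab
  rw [zsmul_eq_mul, mul_one] at hn
  rw [← hn] at h0 h1
  have h0' : m < n := by exact_mod_cast h0
  have h1' : n < m + 1 := by exact_mod_cast h1
  omega

instance : Nontrivial 𝕋 := ⟨⟨((2⁻¹:ℝ) : 𝕋), ((0:ℝ) : 𝕋), coe_ne 0 (by norm_num) (by norm_num)⟩⟩

lemma exists_ne_ne (a c : 𝕋) : ∃ u : 𝕋, u ≠ a ∧ u ≠ c := by
  have h10 : ((4⁻¹:ℝ) : 𝕋) ≠ ((0:ℝ) : 𝕋) := coe_ne 0 (by norm_num) (by norm_num)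
  have h20 : ((2⁻¹:ℝ) : 𝕋) ≠ ((0:ℝ) : 𝕋) := coe_ne 0 (by norm_num) (by norm_num)
  have h12 : ((4⁻¹:ℝ) : 𝕋) ≠ ((2⁻¹:ℝ) : 𝕋) := coe_ne (-1) (by norm_num) (by norm_num)
  by_cases h0 : ((0:ℝ) : 𝕋) ≠ a ∧ ((0:ℝ) : 𝕋) ≠ c
  · exact ⟨_, h0⟩
  by_cases h1 : ((4⁻¹:ℝ) : 𝕋) ≠ a ∧ ((4⁻¹:ℝ) : 𝕋) ≠ c
  · exact ⟨_, h1⟩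
  rw [not_and_or, not_not, not_not] at h0 h1
  refine ⟨((2⁻¹:ℝ) : 𝕋), ?_, ?_⟩ <;> rcases h0 with h0 | h0 <;> rcases h1 with h1 | h1 <;>
      intro hcon <;>
    first
      | exact h20 (hcon.trans h0.symm)
      | exact h12 (h1.trans hcon.symm)
      | exact h10 (h1.trans h0.symm)

noncomputable def g : 𝕋 → ℝ := fun x => ((AddCircle.toCircle x : Circle) : ℂ).im

lemma g_cont : Continuous g :=
  Complex.continuous_im.comp (continuous_subtype_val.comp AddCircle.continuous_toCircle)

lemma g_coe (t : ℝ) : g ↑t = Real.sin (2 * Real.pi * t) := by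
  simp only [g, AddCircle.toCircle_apply_mk, Circle.coe_exp, Complex.exp_mul_I]
  simp only [Complex.add_im, Complex.mul_im, Complex.cos_ofReal_im, Complex.sin_ofReal_re,
    Complex.I_im, Complex.I_re, Complex.sin_ofReal_im]
  norm_num

lemma g_quarter : g ↑(4⁻¹:ℝ) = 1 := by
  rw [g_coe, show 2 * Real.pi * 4⁻¹ = Real.pi / 2 by ring, Real.sin_pi_div_two]

lemma g_three_quarter : g ↑((3:ℝ)/4) = -1 := by
  rw [g_coe, show 2 * Real.pi * (3/4) = Real.pi + Real.pi/2 by ring, Real.sin_add, Real.sin_pi,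
    Real.cos_pi]
  simp

lemma toCircle_half : (AddCircle.toCircle ((2⁻¹:ℝ):𝕋) : ℂ) = -1 := by
  rw [AddCircle.toCircle_apply_mk, Circle.coe_exp, show 2*Real.pi/1*2⁻¹ = Real.pi by ring]
  exact Complex.exp_pi_mul_I

lemma g_eq_zero {x : 𝕋} (h : g x = 0) : x = ((0:ℝ):𝕋) ∨ x = ((2⁻¹:ℝ):𝕋) := by
  set z : Circle := AddCircle.toCircle x with hz
  have h2 : Complex.normSq (z:ℂ) = 1 := by
    rw [← Complex.sq_norm, Circle.norm_coe]; norm_num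
  rw [Complex.normSq_apply, show ((z:ℂ).im) = 0 from h] at h2
  have hre : (z:ℂ).re = 1 ∨ (z:ℂ).re = -1 := mul_self_eq_one_iff.mp (by linarith)
  have hinj := AddCircle.injective_toCircle (T := (1:ℝ)) one_ne_zero
  rcases hre with h1 | h1
  · left
    apply hinj
    rw [← hz, show ((0:ℝ):𝕋) = 0 from rfl, AddCircle.toCircle_zero]
    ext1
    apply Complex.ext <;> simp [h1, show ((z:ℂ).im) = 0 from h]
  · right
    apply hinj
    rw [← hz]
    ext1
    rw [toCircle_half]
    apply Complex.ext <;> simp [h1, show ((z:ℂ).im) = 0 from h]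

/-- The homeomorphism of character spaces induced by a star-algebra equivalence. -/
noncomputable def charHomeo (e : C(𝕋, ℂ) ≃⋆ₐ[ℂ] C(𝕋 × 𝕋, ℂ)) :
    characterSpace ℂ C(𝕋, ℂ) ≃ₜ characterSpace ℂ C(𝕋 × 𝕋, ℂ) where
  toFun := compContinuousMap (e.symm : C(𝕋 × 𝕋, ℂ) →⋆ₐ[ℂ] C(𝕋, ℂ))
  invFun := compContinuousMap (e : C(𝕋, ℂ) →⋆ₐ[ℂ] C(𝕋 × 𝕋, ℂ))
  left_inv := by
    intro φ
    ext f
    simp [StarAlgEquiv.symm_apply_apply]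
  right_inv := by
    intro φ
    ext f
    simp [StarAlgEquiv.apply_symm_apply]
  continuous_toFun := (compContinuousMap _).continuous
  continuous_invFun := (compContinuousMap _).continuous

/-- The homeomorphism of spaces induced by a star-algebra equivalence of continuous functions. -/
noncomputable def torusHomeo (e : C(𝕋, ℂ) ≃⋆ₐ[ℂ] C(𝕋 × 𝕋, ℂ)) : 𝕋 ≃ₜ 𝕋 × 𝕋 :=
  (homeoEval 𝕋 ℂ).trans ((charHomeo e).trans (homeoEval (𝕋 × 𝕋) ℂ).symm)

end CircleTorusAux

open CircleTorusAux

/-- The C*-algebras `C(𝕋, ℂ)` and `C(𝕋 × 𝕋, ℂ)` are not isomorphic as `ℂ`-star-algebras. -/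
theorem continuousFunctions_circle_not_starAlgEquiv_torus :
    IsEmpty (C(AddCircle (1 : ℝ), ℂ) ≃⋆ₐ[ℂ] C(AddCircle (1 : ℝ) × AddCircle (1 : ℝ), ℂ)) := by
  constructor
  intro e
  set h := torusHomeo e with hh
  -- the complement of {0, 1/2} in the circle
  set C : Set 𝕋 := ({((0:ℝ):𝕋), ((2⁻¹:ℝ):𝕋)}ᶜ : Set 𝕋) with hC
  have hconn2 : IsConnected ({h ((0:ℝ):𝕋), h ((2⁻¹:ℝ):𝕋)}ᶜ : Set (𝕋 × 𝕋)) :=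
    compl_two_connected exists_ne_ne _ _
  have himg : h.symm '' ({h ((0:ℝ):𝕋), h ((2⁻¹:ℝ):𝕋)}ᶜ : Set (𝕋 × 𝕋)) = C := by
    ext x
    constructor
    · rintro ⟨y, hy, rfl⟩
      simp only [hC, Set.mem_compl_iff, Set.mem_insert_iff, Set.mem_singleton_iff,
        not_or] at hy ⊢
      refine ⟨fun hx => hy.1 ?_, fun hx => hy.2 ?_⟩
      · have := congrArg h hx
        rwa [h.apply_symm_apply] at this
      · have := congrArg h hx
        rwa [h.apply_symm_apply] at this
    · intro hx
      simp only [hC, Set.mem_compl_iff, Set.mem_insert_iff, Set.mem_singleton_iff,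
        not_or] at hx
      refine ⟨h x, ?_, h.symm_apply_apply x⟩
      simp only [Set.mem_compl_iff, Set.mem_insert_iff, Set.mem_singleton_iff, not_or]
      exact ⟨fun hc => hx.1 (h.injective hc), fun hc => hx.2 (h.injective hc)⟩
  have hCconn : IsConnected C := himg ▸ hconn2.image _ (h.symm.continuous.continuousOn)
  have hgconn : IsPreconnected (g '' C) := (hCconn.image g g_cont.continuousOn).isPreconnected
  have hmem1 : (1:ℝ) ∈ g '' C := by
    refine ⟨((4⁻¹:ℝ):𝕋), ?_, g_quarter⟩
    simp only [hC, Set.mem_compl_iff, Set.mem_insert_iff, Set.mem_singleton_iff, not_or]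
    exact ⟨coe_ne 0 (by norm_num) (by norm_num), coe_ne (-1) (by norm_num) (by norm_num)⟩
  have hmem2 : (-1:ℝ) ∈ g '' C := by
    refine ⟨((((3:ℝ)/4) : ℝ) : 𝕋), ?_, g_three_quarter⟩
    simp only [hC, Set.mem_compl_iff, Set.mem_insert_iff, Set.mem_singleton_iff, not_or]
    exact ⟨coe_ne 0 (by norm_num) (by norm_num), coe_ne 0 (by norm_num) (by norm_num)⟩
  have h0mem : (0:ℝ) ∈ g '' C :=
    hgconn.ordConnected.out hmem2 hmem1 ⟨by norm_num, by norm_num⟩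
  obtain ⟨x, hxC, hx0⟩ := h0mem
  rcases g_eq_zero hx0 with rfl | rfl
  · exact hxC (by simp)
  · exact hxC (by simp)
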